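/- For every n ≥ 3, the subgroup ⟨S_n({123, 231, 312})⟩ of S_n is isomorphic to the dihedral group D_n of order 2n. -/

import Mathlib

/-- A permutation `π ∈ S_n` contains the pattern `τ ∈ S_k` if there is a strictly
increasing `f : Fin k → Fin n` such that `τ a < τ b ↔ π (f a) < π (f b)`. -/
def PermContains {k n : ℕ} (τ : Equiv.Perm (Fin k)) (π : Equiv.Perm (Fin n)) : Prop :=
  ∃ f : Fin k → Fin n, StrictMono f ∧ ∀ a b : Fin k, τ a < τ b ↔ π (f a) < π (f b)

/-- `avoidSet n T` is `S_n(T)`: the permutations of `Fin n` avoiding every pattern in `T`,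
where `T` is a set of permutations of arbitrary lengths. -/
def avoidSet (n : ℕ) (T : Set (Σ k : ℕ, Equiv.Perm (Fin k))) : Set (Equiv.Perm (Fin n)) :=
  {π | ∀ τ ∈ T, ¬ PermContains τ.2 π}
/-- The pattern 231. -/
def p231 : Equiv.Perm (Fin 3) := finRotate 3
/-- The pattern 312. -/
def p312 : Equiv.Perm (Fin 3) := (finRotate 3)⁻¹

namespace AvoidDih

lemma sub_val {m : ℕ} (j x : Fin (m+3)) :
    (j - x).val = if x.val ≤ j.val then j.val - x.val else (m+3) + j.val - x.val := by
  have hj := j.isLt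
  have hx := x.isLt
  rw [Fin.sub_def]
  show ((m+3) - x.val + j.val) % (m+3) = _
  split
  · next h =>
      have e : (m+3) - x.val + j.val = (m+3) + (j.val - x.val) := by omega
      rw [e, Nat.add_mod_left, Nat.mod_eq_of_lt (by omega)]
  · next h =>
      rw [Nat.mod_eq_of_lt (by omega)]
      omega

lemma triple_mono {m : ℕ} {x y z : Fin (m+3)} (hxy : x < y) (hyz : y < z) :
    StrictMono ![x, y, z] := by
  intro a b hab
  fin_cases a <;> fin_cases b <;>
    first
      | exact absurd hab (by decide)
      | exact hxy
      | exact hyz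
      | exact hxy.trans hyz

section triples
variable {m : ℕ} (π : Equiv.Perm (Fin (m+3))) {x y z : Fin (m+3)}

lemma c123 (hxy : x < y) (hyz : y < z) (h1 : π x < π y) (h2 : π y < π z) :
    PermContains (1 : Equiv.Perm (Fin 3)) π := by
  refine ⟨![x, y, z], triple_mono hxy hyz, ?_⟩
  intro a b
  fin_cases a <;> fin_cases b <;>
    first
      | exact iff_of_true (by decide) h1
      | exact iff_of_true (by decide) h2
      | exact iff_of_true (by decide) (h1.trans h2)
      | exact iff_of_false (by decide) (lt_irrefl _)
      | exact iff_of_false (by decide) (asymm h1)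
      | exact iff_of_false (by decide) (asymm h2)
      | exact iff_of_false (by decide) (asymm (h1.trans h2))

lemma c231 (hxy : x < y) (hyz : y < z) (h1 : π z < π x) (h2 : π x < π y) :
    PermContains p231 π := by
  refine ⟨![x, y, z], triple_mono hxy hyz, ?_⟩
  intro a b
  fin_cases a <;> fin_cases b <;>
    first
      | exact iff_of_true (by decide) h1
      | exact iff_of_true (by decide) h2
      | exact iff_of_true (by decide) (h1.trans h2)
      | exact iff_of_false (by decide) (lt_irrefl _)
      | exact iff_of_false (by decide) (asymm h1)
      | exact iff_of_false (by decide) (asymm h2)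
      | exact iff_of_false (by decide) (asymm (h1.trans h2))

lemma c312 (hxy : x < y) (hyz : y < z) (h1 : π y < π z) (h2 : π z < π x) :
    PermContains p312 π := by
  refine ⟨![x, y, z], triple_mono hxy hyz, ?_⟩
  intro a b
  fin_cases a <;> fin_cases b <;>
    first
      | exact iff_of_true (by decide) h1
      | exact iff_of_true (by decide) h2
      | exact iff_of_true (by decide) (h1.trans h2)
      | exact iff_of_false (by decide) (lt_irrefl _)
      | exact iff_of_false (by decide) (asymm h1)
      | exact iff_of_false (by decide) (asymm h2)
      | exact iff_of_false (by decide) (asymm (h1.trans h2))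

lemma step (h123 : ¬ PermContains (1 : Equiv.Perm (Fin 3)) π)
    (h231 : ¬ PermContains p231 π) (h312 : ¬ PermContains p312 π)
    (x y : Fin (m+3)) (hxy : (x : ℕ) + 1 = (y : ℕ)) : π y = π x - 1 := by
  have hxylt : x < y := by rw [Fin.lt_def]; omega
  have hxyne : x ≠ y := ne_of_lt hxylt
  have hne : π x ≠ π y := fun h => hxyne (π.injective h)
  have hbetween : ∀ m' : Fin (m+3), m' ≠ x → m' ≠ y → m' < x ∨ y < m' := by
    intro m' h1 h2
    have e1 : m'.val ≠ x.val := fun h => h1 (Fin.ext h)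
    have e2 : m'.val ≠ y.val := fun h => h2 (Fin.ext h)
    rw [Fin.lt_def, Fin.lt_def]
    omega
  rcases hne.lt_or_gt with hlt | hgt
  · -- ascent: π x must be 0, π y must be the max
    have hx0 : (π x).val = 0 := by
      by_contra h0
      have hπm' : π (π⁻¹ 0) = 0 := π.apply_symm_apply 0
      set m' := π⁻¹ (0 : Fin (m+3)) with hm'
      have h1 : π m' < π x := by rw [hπm', Fin.lt_def]; simpa using Nat.pos_of_ne_zero h0
      have hm'x : m' ≠ x := fun h => lt_irrefl _ (h ▸ h1)
      have hm'y : m' ≠ y := fun h => lt_asymm hlt (h ▸ h1)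
      rcases hbetween m' hm'x hm'y with hc | hc
      · exact h123 (c123 π hc hxylt h1 hlt)
      · exact h231 (c231 π hxylt hc h1 hlt)
    have hyl : (π y).val = m + 2 := by
      by_contra h0
      have hπm' : π (π⁻¹ (Fin.last (m+2))) = Fin.last (m+2) := π.apply_symm_apply _
      set m' := π⁻¹ (Fin.last (m+2)) with hm'
      have h1 : π y < π m' := by
        rw [hπm', Fin.lt_def]
        have := (π y).isLt
        simpa [Fin.last] using by omega
      have hm'y : m' ≠ y := fun h => lt_irrefl _ (h ▸ h1)
      have hm'x : m' ≠ x := fun h => lt_irrefl _ (h ▸ (hlt.trans h1))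
      rcases hbetween m' hm'x hm'y with hc | hc
      · exact h312 (c312 π hc hxylt hlt h1)
      · exact h123 (c123 π hxylt hc hlt h1)
    apply Fin.ext
    rw [sub_val]
    split <;> simp only [Fin.val_one] at * <;> omega
  · -- descent: π y = π x - 1 with no wrap
    rw [Fin.lt_def] at hgt
    have key : (π y).val + 1 = (π x).val := by
      by_contra h0
      have hlt2 : (π y).val + 1 < (π x).val := by omega
      set w : Fin (m+3) := ⟨(π y).val + 1, by have := (π x).isLt; omega⟩ with hw
      have hπm' : π (π⁻¹ w) = w := π.apply_symm_apply w
      set m' := π⁻¹ w with hm'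
      have hw1 : π y < π m' := by rw [hπm', Fin.lt_def]; simp [hw]
      have hw2 : π m' < π x := by rw [hπm', Fin.lt_def]; simpa [hw] using hlt2
      have hm'x : m' ≠ x := fun h => lt_irrefl _ (h ▸ hw2)
      have hm'y : m' ≠ y := fun h => lt_irrefl _ (h ▸ hw1)
      rcases hbetween m' hm'x hm'y with hc | hc
      · exact h231 (c231 π hc hxylt hw1 hw2)
      · exact h312 (c312 π hxylt hc hw1 hw2)
    apply Fin.ext
    rw [sub_val]
    split <;> simp only [Fin.val_one] at * <;> omega

lemma avoid_eq_subLeft (h123 : ¬ PermContains (1 : Equiv.Perm (Fin 3)) π)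
    (h231 : ¬ PermContains p231 π) (h312 : ¬ PermContains p312 π) :
    π = Equiv.subLeft (π 0) := by
  have key : ∀ k : ℕ, ∀ hk : k < m + 3, π ⟨k, hk⟩ = π 0 - ⟨k, hk⟩ := by
    intro k
    induction k with
    | zero =>
        intro hk
        have : (⟨0, hk⟩ : Fin (m+3)) = 0 := rfl
        rw [this, sub_zero]
    | succ k ih =>
        intro hk
        have hk' : k < m + 3 := by omega
        have hstep := step π h123 h231 h312 ⟨k, hk'⟩ ⟨k+1, hk⟩ rfl
        rw [hstep, ih hk']
        have he : (⟨k+1, hk⟩ : Fin (m+3)) = ⟨k, hk'⟩ + 1 := by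
          apply Fin.ext
          simp only [Fin.add_def, Fin.val_one]
          exact (Nat.mod_eq_of_lt hk).symm
        rw [he]
        exact sub_sub _ _ _
  apply Equiv.ext
  intro x
  have := key x.val x.isLt
  simpa [Equiv.subLeft_apply] using this

lemma sub_lt_lemma {j x y : Fin (m+3)} (hxy : x < y) (h : j - x < j - y) :
    x.val ≤ j.val ∧ j.val < y.val := by
  have hx := sub_val j x
  have hy := sub_val j y
  have hxl := x.isLt
  have hyl := y.isLt
  have hjl := j.isLt
  rw [Fin.lt_def] at h hxy
  split at hx <;> split at hy <;> omega

end triples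

def T3 : Set (Σ k : ℕ, Equiv.Perm (Fin k)) :=
  {⟨3, (1 : Equiv.Perm (Fin 3))⟩, ⟨3, p231⟩, ⟨3, p312⟩}

lemma not_contains_1 {m : ℕ} (j : Fin (m+3)) :
    ¬ PermContains (1 : Equiv.Perm (Fin 3)) (Equiv.subLeft j) := by
  rintro ⟨f, hf, hp⟩
  have h01 : f 0 < f 1 := hf (by decide)
  have h12 : f 1 < f 2 := hf (by decide)
  have e1 : Equiv.subLeft j (f 0) < Equiv.subLeft j (f 1) := (hp 0 1).mp (by decide)
  have e2 : Equiv.subLeft j (f 1) < Equiv.subLeft j (f 2) := (hp 1 2).mp (by decide)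
  simp only [Equiv.subLeft_apply] at e1 e2
  obtain ⟨a1, a2⟩ := sub_lt_lemma h01 e1
  obtain ⟨b1, b2⟩ := sub_lt_lemma h12 e2
  omega

lemma not_contains_231 {m : ℕ} (j : Fin (m+3)) :
    ¬ PermContains p231 (Equiv.subLeft j) := by
  rintro ⟨f, hf, hp⟩
  have h01 : f 0 < f 1 := hf (by decide)
  have h12 : f 1 < f 2 := hf (by decide)
  have hfl2 := (f 2).isLt
  have e1 : Equiv.subLeft j (f 0) < Equiv.subLeft j (f 1) := (hp 0 1).mp (by decide)
  have e2 : Equiv.subLeft j (f 2) < Equiv.subLeft j (f 0) := (hp 2 0).mp (by decide)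
  simp only [Equiv.subLeft_apply] at e1 e2
  obtain ⟨a1, a2⟩ := sub_lt_lemma h01 e1
  have hv0 := sub_val j (f 0)
  have hv2 := sub_val j (f 2)
  rw [Fin.lt_def] at e2 h12
  split at hv0 <;> split at hv2 <;> omega

lemma not_contains_312 {m : ℕ} (j : Fin (m+3)) :
    ¬ PermContains p312 (Equiv.subLeft j) := by
  rintro ⟨f, hf, hp⟩
  have h01 : f 0 < f 1 := hf (by decide)
  have h12 : f 1 < f 2 := hf (by decide)
  have hfl2 := (f 2).isLt
  have e1 : Equiv.subLeft j (f 1) < Equiv.subLeft j (f 2) := (hp 1 2).mp (by decide)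
  have e2 : Equiv.subLeft j (f 2) < Equiv.subLeft j (f 0) := (hp 2 0).mp (by decide)
  simp only [Equiv.subLeft_apply] at e1 e2
  obtain ⟨a1, a2⟩ := sub_lt_lemma h12 e1
  have hv0 := sub_val j (f 0)
  have hv2 := sub_val j (f 2)
  rw [Fin.lt_def] at e2 h01
  split at hv0 <;> split at hv2 <;> omega

lemma subLeft_mem {m : ℕ} (j : Fin (m+3)) : Equiv.subLeft j ∈ avoidSet (m+3) T3 := by
  intro τ hτ
  simp only [T3, Set.mem_insert_iff, Set.mem_singleton_iff] at hτ
  rcases hτ with rfl | rfl | rfl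
  · exact not_contains_1 j
  · exact not_contains_231 j
  · exact not_contains_312 j

lemma avoid_eq (m : ℕ) :
    avoidSet (m+3) T3 = Set.range (fun j : Fin (m+3) => Equiv.subLeft j) := by
  ext π
  constructor
  · intro hπ
    have h123 : ¬ PermContains (1 : Equiv.Perm (Fin 3)) π :=
      hπ ⟨3, (1 : Equiv.Perm (Fin 3))⟩ (Or.inl rfl)
    have h231 : ¬ PermContains p231 π := hπ ⟨3, p231⟩ (Or.inr (Or.inl rfl))
    have h312 : ¬ PermContains p312 π := hπ ⟨3, p312⟩ (Or.inr (Or.inr rfl))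
    exact ⟨π 0, (avoid_eq_subLeft π h123 h231 h312).symm⟩
  · rintro ⟨j, rfl⟩
    exact subLeft_mem j

def phi (m : ℕ) : DihedralGroup (m+3) →* Equiv.Perm (Fin (m+3)) where
  toFun g := match g with
    | DihedralGroup.r i => Equiv.subRight (i : Fin (m+3))
    | DihedralGroup.sr i => Equiv.subLeft (i : Fin (m+3))
  map_one' := by
    show Equiv.subRight ((0 : ZMod (m+3)) : Fin (m+3)) = 1
    ext x
    simp [Equiv.subRight_apply]
  map_mul' := by
    rintro (i | i) (j | j)
    · show Equiv.subRight ((i : Fin (m+3)) + (j : Fin (m+3))) =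
        Equiv.subRight (i : Fin (m+3)) * Equiv.subRight (j : Fin (m+3))
      ext x
      simp only [Equiv.Perm.mul_apply, Equiv.subRight_apply]
      ring
    · show Equiv.subLeft ((j : Fin (m+3)) - (i : Fin (m+3))) =
        Equiv.subRight (i : Fin (m+3)) * Equiv.subLeft (j : Fin (m+3))
      ext x
      simp only [Equiv.Perm.mul_apply, Equiv.subRight_apply, Equiv.subLeft_apply]
      ring
    · show Equiv.subLeft ((i : Fin (m+3)) + (j : Fin (m+3))) =
        Equiv.subLeft (i : Fin (m+3)) * Equiv.subRight (j : Fin (m+3))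
      ext x
      simp only [Equiv.Perm.mul_apply, Equiv.subRight_apply, Equiv.subLeft_apply]
      ring
    · show Equiv.subRight ((j : Fin (m+3)) - (i : Fin (m+3))) =
        Equiv.subLeft (i : Fin (m+3)) * Equiv.subLeft (j : Fin (m+3))
      ext x
      simp only [Equiv.Perm.mul_apply, Equiv.subLeft_apply, Equiv.subRight_apply]
      ring

lemma phi_inj (m : ℕ) : Function.Injective (phi m) := by
  rw [injective_iff_map_eq_one]
  rintro (i | i) h
  · have h0 : (phi m (DihedralGroup.r i)) 0 = (1 : Equiv.Perm (Fin (m+3))) 0 := by rw [h]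
    have h0' : (0 : Fin (m+3)) - (show Fin (m+3) from i) = 0 := h0
    have hi : (show Fin (m+3) from i) = 0 := by rwa [zero_sub, neg_eq_zero] at h0'
    show DihedralGroup.r i = DihedralGroup.r 0
    exact congrArg DihedralGroup.r (show (i : ZMod (m+3)) = 0 from hi)
  · exfalso
    have h1 : (phi m (DihedralGroup.sr i)) 0 = (1 : Equiv.Perm (Fin (m+3))) 0 := by rw [h]
    have h1' : (show Fin (m+3) from i) - 0 = 0 := h1
    rw [sub_zero] at h1'
    have h2 : (phi m (DihedralGroup.sr i)) 1 = (1 : Equiv.Perm (Fin (m+3))) 1 := by rw [h]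
    have h2' : (show Fin (m+3) from i) - 1 = 1 := h2
    rw [h1'] at h2'
    have hv := congrArg Fin.val h2'
    rw [sub_val] at hv
    simp [Fin.val_one] at hv

lemma closure_range (m : ℕ) :
    Subgroup.closure (Set.range (fun j : Fin (m+3) => Equiv.subLeft j)) = (phi m).range := by
  apply le_antisymm
  · rw [Subgroup.closure_le]
    rintro _ ⟨j, rfl⟩
    exact ⟨DihedralGroup.sr j, rfl⟩
  · rintro g ⟨(i | i), rfl⟩
    · have he : DihedralGroup.sr 0 * DihedralGroup.sr i = DihedralGroup.r i := by
        rw [DihedralGroup.sr_mul_sr, sub_zero]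
      rw [← he, map_mul]
      exact mul_mem (Subgroup.subset_closure ⟨(0 : ZMod (m+3)), rfl⟩)
        (Subgroup.subset_closure ⟨(i : ZMod (m+3)), rfl⟩)
    · exact Subgroup.subset_closure ⟨(i : ZMod (m+3)), rfl⟩

end AvoidDih

theorem closure_avoid_123_231_312_dihedral (n : ℕ) (hn : 3 ≤ n) :
    Nonempty (Subgroup.closure
      (avoidSet n ({⟨3, (1 : Equiv.Perm (Fin 3))⟩, ⟨3, p231⟩, ⟨3, p312⟩} :
        Set (Σ k : ℕ, Equiv.Perm (Fin k)))) ≃* DihedralGroup n) := by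
  obtain ⟨m, rfl⟩ : ∃ m, n = m + 3 := ⟨n - 3, by omega⟩
  rw [show ({⟨3, (1 : Equiv.Perm (Fin 3))⟩, ⟨3, p231⟩, ⟨3, p312⟩} :
        Set (Σ k : ℕ, Equiv.Perm (Fin k))) = AvoidDih.T3 from rfl,
      AvoidDih.avoid_eq, AvoidDih.closure_range]
  exact ⟨(MonoidHom.ofInjective (AvoidDih.phi_inj m)).symm⟩
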